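/- Let τ be the graded flip τ(a ⊗ b) = (−1)^{ab} b ⊗ a and P_Λ^{op} := τ ∘ P_Λ ∘ τ. Then {v, w} := μ ∘ (P_Λ − P_Λ^{op})(v ⊗ w) defines a ℤ₂-graded Poisson bracket on Sym(V): it is graded antisymmetric, satisfies the graded Leibniz rule in each argument and the graded Jacobi identity. Moreover {v, w} = 2 μ ∘ P_{Λ₋}(v ⊗ w), so the bracket depends only on the antisymmetric part Λ₋ = ½(Λ − Λ∘τ) of Λ. -/

import Mathlib

open scoped TensorProduct

section AlgCore

variable (𝕜 : Type) [Field 𝕜] [CharZero 𝕜]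
variable (A : Type) [Ring A] [Algebra 𝕜 A]

/-- The Koszul sign `(−1)^{ij}` of two parities. -/
def ksign (i j : ZMod 2) : 𝕜 := (-1 : 𝕜) ^ (i.val * j.val)

/-- The multiplication map `μ : A ⊗ A → A`. -/
noncomputable def mu : A ⊗[𝕜] A →ₗ[𝕜] A := LinearMap.mul' 𝕜 A

/-- `P ⊗ id` acting on the first two factors of `A ⊗ (A ⊗ A)`. -/
noncomputable def P12 (P : A ⊗[𝕜] A →ₗ[𝕜] A ⊗[𝕜] A) :
    A ⊗[𝕜] (A ⊗[𝕜] A) →ₗ[𝕜] A ⊗[𝕜] (A ⊗[𝕜] A) :=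
  (TensorProduct.assoc 𝕜 A A A).toLinearMap ∘ₗ
    (LinearMap.rTensor A P) ∘ₗ (TensorProduct.assoc 𝕜 A A A).symm.toLinearMap

/-- `id ⊗ P` acting on the last two factors of `A ⊗ (A ⊗ A)`. -/
noncomputable def P23 (P : A ⊗[𝕜] A →ₗ[𝕜] A ⊗[𝕜] A) :
    A ⊗[𝕜] (A ⊗[𝕜] A) →ₗ[𝕜] A ⊗[𝕜] (A ⊗[𝕜] A) :=
  LinearMap.lTensor A P

/-- `P^{13} = (id ⊗ τ) ∘ (P ⊗ id) ∘ (id ⊗ τ)`. -/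
noncomputable def P13 (P τ : A ⊗[𝕜] A →ₗ[𝕜] A ⊗[𝕜] A) :
    A ⊗[𝕜] (A ⊗[𝕜] A) →ₗ[𝕜] A ⊗[𝕜] (A ⊗[𝕜] A) :=
  (LinearMap.lTensor A τ) ∘ₗ P12 𝕜 A P ∘ₗ (LinearMap.lTensor A τ)

/-- `μ ⊗ id : A ⊗ (A ⊗ A) → A ⊗ A`. -/
noncomputable def mu12 : A ⊗[𝕜] (A ⊗[𝕜] A) →ₗ[𝕜] A ⊗[𝕜] A :=
  (LinearMap.rTensor A (mu 𝕜 A)) ∘ₗ (TensorProduct.assoc 𝕜 A A A).symm.toLinearMap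

/-- `id ⊗ μ : A ⊗ (A ⊗ A) → A ⊗ A`. -/
noncomputable def mu23 : A ⊗[𝕜] (A ⊗[𝕜] A) →ₗ[𝕜] A ⊗[𝕜] A :=
  LinearMap.lTensor A (mu 𝕜 A)

/-- The operator Leibniz rules `P ∘ (μ ⊗ id) = (μ ⊗ id) ∘ (P^{13} + P^{23})` and
`P ∘ (id ⊗ μ) = (id ⊗ μ) ∘ (P^{12} + P^{13})` characterizing biderivation-type
operators. -/
def LeibnizRules (P τ : A ⊗[𝕜] A →ₗ[𝕜] A ⊗[𝕜] A) : Prop :=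
  P ∘ₗ mu12 𝕜 A = mu12 𝕜 A ∘ₗ (P13 𝕜 A P τ + P23 𝕜 A P) ∧
    P ∘ₗ mu23 𝕜 A = mu23 𝕜 A ∘ₗ (P12 𝕜 A P + P13 𝕜 A P τ)

/-- `τ` is the Koszul-graded flip of `A ⊗ A`. -/
def IsKoszulFlip (gr : ZMod 2 → Submodule 𝕜 A) (τ : A ⊗[𝕜] A →ₗ[𝕜] A ⊗[𝕜] A) : Prop :=
  ∀ (i j : ZMod 2), ∀ a ∈ gr i, ∀ b ∈ gr j,
    τ (a ⊗ₜ[𝕜] b) = ksign 𝕜 i j • (b ⊗ₜ[𝕜] a)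

/-- The `k`-th star product coefficient `C_k(a,b) = (1/k!) μ(P^k(a ⊗ b))`. -/
noncomputable def Ck (P : A ⊗[𝕜] A →ₗ[𝕜] A ⊗[𝕜] A) (k : ℕ) (a b : A) : A :=
  (k.factorial : 𝕜)⁻¹ • mu 𝕜 A ((P ^ k) (a ⊗ₜ[𝕜] b))

/-- The star product `⋆ = μ ∘ e^{νP}` on `A⟦ν⟧`, extended `𝕜⟦ν⟧`-bilinearly. -/
noncomputable def starPS (P : A ⊗[𝕜] A →ₗ[𝕜] A ⊗[𝕜] A) (f g : PowerSeries A) :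
    PowerSeries A :=
  PowerSeries.mk fun n =>
    ∑ km ∈ Finset.HasAntidiagonal.antidiagonal n, ∑ ij ∈ Finset.HasAntidiagonal.antidiagonal km.2,
      Ck 𝕜 A P km.1 (PowerSeries.coeff (R := A) ij.1 f) (PowerSeries.coeff (R := A) ij.2 g)

/-- The submodule `p ⊗ q ⊆ A ⊗ A` generated by two submodules. -/
noncomputable def tsub (p q : Submodule 𝕜 A) : Submodule 𝕜 (A ⊗[𝕜] A) :=
  LinearMap.range (TensorProduct.map p.subtype q.subtype)

end AlgCore

/-- The Poisson bracket `{a, b} = μ ∘ (P − τ∘P∘τ)(a ⊗ b)`. -/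
noncomputable def brA (𝕜 : Type) [Field 𝕜] [CharZero 𝕜] (A : Type) [Ring A] [Algebra 𝕜 A]
    (P τ : A ⊗[𝕜] A →ₗ[𝕜] A ⊗[𝕜] A) (a b : A) : A :=
  mu 𝕜 A ((P - τ ∘ₗ P ∘ₗ τ) (a ⊗ₜ[𝕜] b))


/-! ### Auxiliary development -/

set_option linter.unusedSectionVars false

section Aux

variable {𝕜 : Type} [Field 𝕜] [CharZero 𝕜]
variable {A : Type} [Ring A] [Algebra 𝕜 A]

-- ksign lemmas
lemma ksign_symm (i j : ZMod 2) : ksign 𝕜 i j = ksign 𝕜 j i := by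
  rw [ksign, ksign, Nat.mul_comm]

lemma ksign_sq (i j : ZMod 2) : ksign 𝕜 i j * ksign 𝕜 i j = 1 := by
  rw [ksign, ← pow_add]
  exact Even.neg_one_pow ⟨_, rfl⟩

lemma ksign_zero_left (j : ZMod 2) : ksign 𝕜 0 j = 1 := by
  simp [ksign]

lemma ksign_zero_right (j : ZMod 2) : ksign 𝕜 j 0 = 1 := by
  simp [ksign]

lemma ksign_add_right (i j k : ZMod 2) :
    ksign 𝕜 i (j + k) = ksign 𝕜 i j * ksign 𝕜 i k := by
  have hz : ∀ z : ZMod 2, z = 0 ∨ z = 1 := by decide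
  rcases hz i with rfl | rfl <;> rcases hz j with rfl | rfl <;> rcases hz k with rfl | rfl <;>
    simp only [ksign] <;> norm_num [show ((1:ZMod 2) + 1) = 0 by decide, ZMod.val_one,
      show ZMod.val (2:ZMod 2) = 0 from rfl]

lemma ksign_add_left (i j k : ZMod 2) :
    ksign 𝕜 (i + j) k = ksign 𝕜 i k * ksign 𝕜 j k := by
  have hz : ∀ z : ZMod 2, z = 0 ∨ z = 1 := by decide
  rcases hz i with rfl | rfl <;> rcases hz j with rfl | rfl <;> rcases hz k with rfl | rfl <;>
    simp only [ksign] <;> norm_num [show ((1:ZMod 2) + 1) = 0 by decide, ZMod.val_one,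
      show ZMod.val (2:ZMod 2) = 0 from rfl]

lemma mu_tmul (a b : A) : mu 𝕜 A (a ⊗ₜ[𝕜] b) = a * b :=
  LinearMap.mul'_apply

/-- induction over the ℤ₂-grading -/
lemma grInduction (gr : ZMod 2 → Submodule 𝕜 A) [GradedAlgebra gr] {p : A → Prop} (h0 : p 0)
    (hhom : ∀ (i : ZMod 2), ∀ a ∈ gr i, p a)
    (hadd : ∀ a b, p a → p b → p (a + b)) : ∀ a, p a :=
  DirectSum.Decomposition.inductionOn gr h0 (fun {i} m => hhom i m m.2) hadd

section flip
variable (gr : ZMod 2 → Submodule 𝕜 A) [GradedAlgebra gr]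
variable {τ : A ⊗[𝕜] A →ₗ[𝕜] A ⊗[𝕜] A} (hτ : IsKoszulFlip 𝕜 A gr τ)
variable (hcomm : ∀ (i j : ZMod 2), ∀ a ∈ gr i, ∀ b ∈ gr j, a * b = ksign 𝕜 i j • (b * a))

include hτ hcomm in
lemma mu_tau : ∀ t : A ⊗[𝕜] A, mu 𝕜 A (τ t) = mu 𝕜 A t := by
  have key : ∀ a b : A, mu 𝕜 A (τ (a ⊗ₜ[𝕜] b)) = mu 𝕜 A (a ⊗ₜ[𝕜] b) := by
    intro a
    refine grInduction gr (p := fun a => ∀ b, mu 𝕜 A (τ (a ⊗ₜ[𝕜] b)) = mu 𝕜 A (a ⊗ₜ[𝕜] b))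
      ?_ ?_ ?_ a
    · intro b; simp [TensorProduct.zero_tmul]
    · intro i a ha
      refine grInduction gr ?_ ?_ ?_
      · simp [TensorProduct.tmul_zero]
      · intro j b hb
        rw [hτ i j a ha b hb, map_smul, mu_tmul, mu_tmul, ← hcomm i j a ha b hb]
      · intro x y hx hy
        simp only [TensorProduct.tmul_add, map_add, hx, hy]
    · intro x y hx hy b
      simp only [TensorProduct.add_tmul, map_add, hx b, hy b]
  intro t
  induction t using TensorProduct.induction_on with
  | zero => simp
  | tmul a b => exact key a b
  | add x y hx hy => simp only [map_add, hx, hy]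

end flip
end Aux
set_option synthInstance.maxHeartbeats 400000

section Aux2

variable {𝕜 : Type} [Field 𝕜] [CharZero 𝕜]
variable {A : Type} [Ring A] [Algebra 𝕜 A]
variable (gr : ZMod 2 → Submodule 𝕜 A) [GradedAlgebra gr]
variable {τ P : A ⊗[𝕜] A →ₗ[𝕜] A ⊗[𝕜] A}

set_option linter.unusedSectionVars false

/-- the "f" bilinear map: `f a b = μ (P (a ⊗ b))`. -/
noncomputable def fP {𝕜 : Type} [Field 𝕜] [CharZero 𝕜] {A : Type} [Ring A] [Algebra 𝕜 A]
    (P : A ⊗[𝕜] A →ₗ[𝕜] A ⊗[𝕜] A) (a b : A) : A :=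
  mu 𝕜 A (P (a ⊗ₜ[𝕜] b))

lemma fP_add_left (P : A ⊗[𝕜] A →ₗ[𝕜] A ⊗[𝕜] A) (a a' b : A) :
    fP P (a + a') b = fP P a b + fP P a' b := by
  simp [fP, TensorProduct.add_tmul]

lemma fP_add_right (P : A ⊗[𝕜] A →ₗ[𝕜] A ⊗[𝕜] A) (a b b' : A) :
    fP P a (b + b') = fP P a b + fP P a b' := by
  simp [fP, TensorProduct.tmul_add]

lemma fP_smul_left (P : A ⊗[𝕜] A →ₗ[𝕜] A ⊗[𝕜] A) (c : 𝕜) (a b : A) :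
    fP P (c • a) b = c • fP P a b := by
  rw [fP, fP, ← TensorProduct.smul_tmul', map_smul, map_smul]

lemma fP_smul_right (P : A ⊗[𝕜] A →ₗ[𝕜] A ⊗[𝕜] A) (c : 𝕜) (a b : A) :
    fP P a (c • b) = c • fP P a b := by
  rw [fP, fP, TensorProduct.tmul_smul, map_smul, map_smul]

lemma fP_zero_left (P : A ⊗[𝕜] A →ₗ[𝕜] A ⊗[𝕜] A) (b : A) : fP P 0 b = 0 := by
  simp [fP, TensorProduct.zero_tmul]

lemma fP_zero_right (P : A ⊗[𝕜] A →ₗ[𝕜] A ⊗[𝕜] A) (a : A) : fP P a 0 = 0 := by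
  simp [fP, TensorProduct.tmul_zero]

/-- The bracket formula `{a,b} = f a b − κ(i,j) f b a` on homogeneous elements. -/
lemma brA_eq (hτ : IsKoszulFlip 𝕜 A gr τ)
    (hcomm : ∀ (i j : ZMod 2), ∀ a ∈ gr i, ∀ b ∈ gr j, a * b = ksign 𝕜 i j • (b * a))
    (i j : ZMod 2) (a : A) (ha : a ∈ gr i) (b : A) (hb : b ∈ gr j) :
    brA 𝕜 A P τ a b = fP P a b - ksign 𝕜 i j • fP P b a := by
  have h1 : mu 𝕜 A (τ (P (τ (a ⊗ₜ[𝕜] b)))) = ksign 𝕜 i j • fP P b a := by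
    rw [mu_tau gr hτ hcomm, hτ i j a ha b hb, map_smul, map_smul, fP]
  rw [brA, LinearMap.sub_apply, map_sub, LinearMap.comp_apply, LinearMap.comp_apply, h1]
  rfl

-- μ₃ helper lemmas
lemma mu3_tmul (a : A) (t : A ⊗[𝕜] A) :
    mu 𝕜 A (mu23 𝕜 A (a ⊗ₜ[𝕜] t)) = a * mu 𝕜 A t := by
  simp [mu23, mu_tmul]

lemma mu3_assoc (t : A ⊗[𝕜] A) (c : A) :
    mu 𝕜 A (mu23 𝕜 A ((TensorProduct.assoc 𝕜 A A A) (t ⊗ₜ[𝕜] c))) = mu 𝕜 A t * c := by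
  induction t using TensorProduct.induction_on with
  | zero => simp
  | tmul x y => simp [mu23, mu_tmul, mul_assoc]
  | add x y hx hy => simp only [TensorProduct.add_tmul, map_add, hx, hy, add_mul]

lemma mu3_lTensor_tau (hτ : IsKoszulFlip 𝕜 A gr τ)
    (hcomm : ∀ (i j : ZMod 2), ∀ a ∈ gr i, ∀ b ∈ gr j, a * b = ksign 𝕜 i j • (b * a))
    (y : A ⊗[𝕜] (A ⊗[𝕜] A)) :
    mu 𝕜 A (mu23 𝕜 A (LinearMap.lTensor A τ y)) = mu 𝕜 A (mu23 𝕜 A y) := by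
  induction y using TensorProduct.induction_on with
  | zero => simp
  | tmul x t => rw [LinearMap.lTensor_tmul, mu3_tmul, mu3_tmul, mu_tau gr hτ hcomm]
  | add x y hx hy => simp only [map_add, hx, hy]

lemma mu3_P12 (Q : A ⊗[𝕜] A →ₗ[𝕜] A ⊗[𝕜] A) (a b c : A) :
    mu 𝕜 A (mu23 𝕜 A (P12 𝕜 A Q (a ⊗ₜ[𝕜] (b ⊗ₜ[𝕜] c)))) = fP Q a b * c := by
  rw [P12, LinearMap.comp_apply, LinearMap.comp_apply, LinearEquiv.coe_coe,
    LinearEquiv.coe_coe, TensorProduct.assoc_symm_tmul, LinearMap.rTensor_tmul, mu3_assoc, fP]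

lemma mu3_P13 (hτ : IsKoszulFlip 𝕜 A gr τ)
    (hcomm : ∀ (i j : ZMod 2), ∀ a ∈ gr i, ∀ b ∈ gr j, a * b = ksign 𝕜 i j • (b * a))
    (Q : A ⊗[𝕜] A →ₗ[𝕜] A ⊗[𝕜] A) (a b c : A) (j k : ZMod 2)
    (hb : b ∈ gr j) (hc : c ∈ gr k) :
    mu 𝕜 A (mu23 𝕜 A (P13 𝕜 A Q τ (a ⊗ₜ[𝕜] (b ⊗ₜ[𝕜] c)))) =
      ksign 𝕜 j k • (fP Q a c * b) := by
  rw [P13, LinearMap.comp_apply, LinearMap.comp_apply, LinearMap.lTensor_tmul,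
    hτ j k b hb c hc, TensorProduct.tmul_smul, map_smul, map_smul, map_smul, map_smul,
    mu3_lTensor_tau gr hτ hcomm, mu3_P12]

/-- `μ ∘ mu12 = μ ∘ mu23` (associativity of multiplication). -/
lemma mu_mu12_eq_mu_mu23 (y : A ⊗[𝕜] (A ⊗[𝕜] A)) :
    mu 𝕜 A (mu12 𝕜 A y) = mu 𝕜 A (mu23 𝕜 A y) := by
  induction y using TensorProduct.induction_on with
  | zero => simp
  | add x y hx hy => simp only [map_add, hx, hy]
  | tmul a t =>
    induction t using TensorProduct.induction_on with
    | zero => simp [TensorProduct.tmul_zero]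
    | add u v hu hv => simp only [TensorProduct.tmul_add, map_add, hu, hv]
    | tmul b c =>
      rw [mu3_tmul, mu_tmul, mu12, LinearMap.comp_apply, LinearEquiv.coe_coe,
        TensorProduct.assoc_symm_tmul, LinearMap.rTensor_tmul, mu_tmul, mu_tmul, mul_assoc]

/-- Leibniz rule in the first argument for `f`. -/
lemma fP_mul_left (hτ : IsKoszulFlip 𝕜 A gr τ)
    (hcomm : ∀ (i j : ZMod 2), ∀ a ∈ gr i, ∀ b ∈ gr j, a * b = ksign 𝕜 i j • (b * a))
    (hL : LeibnizRules 𝕜 A P τ) (j k : ZMod 2) (a b c : A)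
    (hb : b ∈ gr j) (hc : c ∈ gr k) :
    fP P (a * b) c = a * fP P b c + ksign 𝕜 j k • (fP P a c * b) := by
  have h := congrArg (fun (F : A ⊗[𝕜] (A ⊗[𝕜] A) →ₗ[𝕜] A ⊗[𝕜] A) =>
    mu 𝕜 A (F (a ⊗ₜ[𝕜] (b ⊗ₜ[𝕜] c)))) hL.1
  simp only [LinearMap.comp_apply, LinearMap.add_apply, map_add] at h
  have hmu12 : mu12 𝕜 A (a ⊗ₜ[𝕜] (b ⊗ₜ[𝕜] c)) = (a * b) ⊗ₜ[𝕜] c := by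
    rw [mu12, LinearMap.comp_apply, LinearEquiv.coe_coe, TensorProduct.assoc_symm_tmul,
      LinearMap.rTensor_tmul, mu_tmul]
  rw [hmu12, mu_mu12_eq_mu_mu23, mu_mu12_eq_mu_mu23] at h
  have h23 : mu 𝕜 A (mu23 𝕜 A (P23 𝕜 A P (a ⊗ₜ[𝕜] (b ⊗ₜ[𝕜] c)))) = a * fP P b c := by
    rw [P23, LinearMap.lTensor_tmul, mu3_tmul, fP]
  rw [mu3_P13 gr hτ hcomm P a b c j k hb hc, h23] at h
  rw [fP, h, add_comm]

/-- Leibniz rule in the second argument for `f`. -/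
lemma fP_mul_right (hτ : IsKoszulFlip 𝕜 A gr τ)
    (hcomm : ∀ (i j : ZMod 2), ∀ a ∈ gr i, ∀ b ∈ gr j, a * b = ksign 𝕜 i j • (b * a))
    (hL : LeibnizRules 𝕜 A P τ) (j k : ZMod 2) (a b c : A)
    (hb : b ∈ gr j) (hc : c ∈ gr k) :
    fP P a (b * c) = fP P a b * c + ksign 𝕜 j k • (fP P a c * b) := by
  have h := congrArg (fun (F : A ⊗[𝕜] (A ⊗[𝕜] A) →ₗ[𝕜] A ⊗[𝕜] A) =>
    mu 𝕜 A (F (a ⊗ₜ[𝕜] (b ⊗ₜ[𝕜] c)))) hL.2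
  simp only [LinearMap.comp_apply, LinearMap.add_apply, map_add] at h
  have hmu23 : mu23 𝕜 A (a ⊗ₜ[𝕜] (b ⊗ₜ[𝕜] c)) = a ⊗ₜ[𝕜] (b * c) := by
    rw [mu23, LinearMap.lTensor_tmul, mu_tmul]
  rw [hmu23, mu3_P12, mu3_P13 gr hτ hcomm P a b c j k hb hc] at h
  rw [fP, h]

end Aux2
section Aux3

variable {𝕜 : Type} [Field 𝕜] [CharZero 𝕜]
variable {A : Type} [Ring A] [Algebra 𝕜 A]
variable (gr : ZMod 2 → Submodule 𝕜 A) [GradedAlgebra gr]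
variable {τ P : A ⊗[𝕜] A →ₗ[𝕜] A ⊗[𝕜] A}
variable {G : Set A}

set_option linter.unusedSectionVars false

/-- every element of the monoid generated by homogeneous generators is homogeneous -/
lemma closure_homog (hG : ∀ v ∈ G, v ∈ gr 0 ∨ v ∈ gr 1) :
    ∀ m ∈ Submonoid.closure G, ∃ i, m ∈ gr i := by
  intro m hm
  induction hm using Submonoid.closure_induction with
  | mem v hv => rcases hG v hv with h | h
                · exact ⟨0, h⟩
                · exact ⟨1, h⟩
  | one => exact ⟨0, SetLike.one_mem_graded gr⟩
  | mul x y hx hy ihx ihy =>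
      obtain ⟨i, hi⟩ := ihx
      obtain ⟨j, hj⟩ := ihy
      exact ⟨i + j, SetLike.mul_mem_graded hi hj⟩

/-- every homogeneous element lies in the span of homogeneous monomials of the
same parity. -/
lemma mem_span_homog (htop : Submodule.span 𝕜 ((Submonoid.closure G : Submonoid A) : Set A) = ⊤)
    (hG : ∀ v ∈ G, v ∈ gr 0 ∨ v ∈ gr 1) (i : ZMod 2) (a : A) (ha : a ∈ gr i) :
    a ∈ Submodule.span 𝕜 (((Submonoid.closure G : Submonoid A) : Set A) ∩ (gr i : Set A)) := by
  have h : a ∈ Submodule.span 𝕜 ((Submonoid.closure G : Submonoid A) : Set A) := by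
    rw [htop]; trivial
  have key : ((DirectSum.decompose gr a i : gr i) : A) ∈
      Submodule.span 𝕜 (((Submonoid.closure G : Submonoid A) : Set A) ∩ (gr i : Set A)) := by
    clear ha
    induction h using Submodule.span_induction with
    | mem m hm =>
        obtain ⟨p, hp⟩ := closure_homog gr hG m hm
        by_cases hpi : p = i
        · subst hpi
          rw [DirectSum.decompose_of_mem_same gr hp]
          exact Submodule.subset_span ⟨hm, hp⟩
        · rw [DirectSum.decompose_of_mem_ne gr hp hpi]
          exact Submodule.zero_mem _
    | zero => rw [DirectSum.decompose_zero]; simp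
    | add x y hx hy ihx ihy =>
        rw [DirectSum.decompose_add]
        exact (by push_cast; exact Submodule.add_mem _ ihx ihy)
    | smul c x hx ihx =>
        rw [DirectSum.decompose_smul]
        exact (by push_cast; exact Submodule.smul_mem _ c ihx)
  rwa [DirectSum.decompose_of_mem_same gr ha] at key

lemma fP_one_right (hτ : IsKoszulFlip 𝕜 A gr τ)
    (hcomm : ∀ (i j : ZMod 2), ∀ a ∈ gr i, ∀ b ∈ gr j, a * b = ksign 𝕜 i j • (b * a))
    (hL : LeibnizRules 𝕜 A P τ) (a : A) : fP P a 1 = 0 := by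
  have h1 : (1 : A) ∈ gr 0 := SetLike.one_mem_graded gr
  have h := fP_mul_right gr hτ hcomm hL 0 0 a 1 1 h1 h1
  simp only [one_mul, mul_one, ksign_zero_left, one_smul] at h
  have h2 : fP P a 1 + fP P a 1 = fP P a 1 + 0 := by rw [add_zero]; exact h.symm
  exact (add_left_cancel h2)

lemma fP_one_left (hτ : IsKoszulFlip 𝕜 A gr τ)
    (hcomm : ∀ (i j : ZMod 2), ∀ a ∈ gr i, ∀ b ∈ gr j, a * b = ksign 𝕜 i j • (b * a))
    (hL : LeibnizRules 𝕜 A P τ) (b : A) : fP P 1 b = 0 := by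
  have h1 : (1 : A) ∈ gr 0 := SetLike.one_mem_graded gr
  induction b using grInduction gr with
  | h0 => exact fP_zero_right P 1
  | hadd x y hx hy => rw [fP_add_right, hx, hy, add_zero]
  | hhom k b hb =>
      have h := fP_mul_left gr hτ hcomm hL 0 k 1 1 b h1 hb
      simp only [one_mul, mul_one, ksign_zero_left, one_smul] at h
      have h2 : fP P 1 b + fP P 1 b = fP P 1 b + 0 := by rw [add_zero]; exact h.symm
      exact (add_left_cancel h2)

/-- parity-additivity of `fP` on monomials. -/
lemma fP_mem_mono (hτ : IsKoszulFlip 𝕜 A gr τ)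
    (hcomm : ∀ (i j : ZMod 2), ∀ a ∈ gr i, ∀ b ∈ gr j, a * b = ksign 𝕜 i j • (b * a))
    (hL : LeibnizRules 𝕜 A P τ)
    (hG : ∀ v ∈ G, v ∈ gr 0 ∨ v ∈ gr 1)
    (hbase : ∀ v ∈ G, ∀ w ∈ G, ∀ i j : ZMod 2, v ∈ gr i → w ∈ gr j → fP P v w ∈ gr (i + j)) :
    ∀ a ∈ Submonoid.closure G, ∀ b ∈ Submonoid.closure G, ∀ i j : ZMod 2,
      a ∈ gr i → b ∈ gr j → fP P a b ∈ gr (i + j) := by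
  intro a ha
  induction ha using Submonoid.closure_induction with
  | one =>
      intro b _ i j _ _
      rw [fP_one_left gr hτ hcomm hL]
      exact Submodule.zero_mem _
  | mem v hv =>
      intro b hb
      induction hb using Submonoid.closure_induction with
      | mem w hw => exact fun i j hvi hwj => hbase v hv w hw i j hvi hwj
      | one =>
          intro i j _ _
          rw [fP_one_right gr hτ hcomm hL]
          exact Submodule.zero_mem _
      | mul x y hx hy ihx ihy =>
          intro i j hvi hxyj
          obtain ⟨k₁, hk₁⟩ := closure_homog gr hG x hx
          obtain ⟨k₂, hk₂⟩ := closure_homog gr hG y hy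
          by_cases h0 : x * y = 0
          · rw [h0, fP_zero_right]
            exact Submodule.zero_mem _
          · have hj : j = k₁ + k₂ :=
              DirectSum.degree_eq_of_mem_mem gr hxyj (SetLike.mul_mem_graded hk₁ hk₂) h0
            subst hj
            rw [fP_mul_right gr hτ hcomm hL k₁ k₂ v x y hk₁ hk₂]
            refine Submodule.add_mem _ ?_ ?_
            · have := SetLike.mul_mem_graded (ihx i k₁ hvi hk₁) hk₂
              have e : i + k₁ + k₂ = i + (k₁ + k₂) := by ring
              rwa [e] at this
            · refine Submodule.smul_mem _ _ ?_
              have := SetLike.mul_mem_graded (ihy i k₂ hvi hk₂) hk₁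
              have e : i + k₂ + k₁ = i + (k₁ + k₂) := by ring
              rwa [e] at this
  | mul x y hx hy ihx ihy =>
      intro b hb i j hxyi hbj
      obtain ⟨k₁, hk₁⟩ := closure_homog gr hG x hx
      obtain ⟨k₂, hk₂⟩ := closure_homog gr hG y hy
      by_cases h0 : x * y = 0
      · rw [h0, fP_zero_left]
        exact Submodule.zero_mem _
      · have hi : i = k₁ + k₂ :=
          DirectSum.degree_eq_of_mem_mem gr hxyi (SetLike.mul_mem_graded hk₁ hk₂) h0
        subst hi
        rw [fP_mul_left gr hτ hcomm hL k₂ j x y b hk₂ hbj]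
        refine Submodule.add_mem _ ?_ ?_
        · have := SetLike.mul_mem_graded hk₁ (ihy b hb k₂ j hk₂ hbj)
          have e : k₁ + (k₂ + j) = k₁ + k₂ + j := by ring
          rwa [e] at this
        · refine Submodule.smul_mem _ _ ?_
          have := SetLike.mul_mem_graded (ihx b hb k₁ j hk₁ hbj) hk₂
          have e : k₁ + j + k₂ = k₁ + k₂ + j := by ring
          rwa [e] at this

/-- parity-additivity of `fP` on all homogeneous elements. -/
lemma fP_mem_gr (hτ : IsKoszulFlip 𝕜 A gr τ)
    (hcomm : ∀ (i j : ZMod 2), ∀ a ∈ gr i, ∀ b ∈ gr j, a * b = ksign 𝕜 i j • (b * a))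
    (hL : LeibnizRules 𝕜 A P τ)
    (htop : Submodule.span 𝕜 ((Submonoid.closure G : Submonoid A) : Set A) = ⊤)
    (hG : ∀ v ∈ G, v ∈ gr 0 ∨ v ∈ gr 1)
    (hbase : ∀ v ∈ G, ∀ w ∈ G, ∀ i j : ZMod 2, v ∈ gr i → w ∈ gr j → fP P v w ∈ gr (i + j)) :
    ∀ (i j : ZMod 2), ∀ a ∈ gr i, ∀ b ∈ gr j, fP P a b ∈ gr (i + j) := by
  intro i j a ha b hb
  have hsa := mem_span_homog gr htop hG i a ha
  have hsb := mem_span_homog gr htop hG j b hb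
  clear ha hb
  induction hsa using Submodule.span_induction with
  | mem a' ha' =>
      induction hsb using Submodule.span_induction with
      | mem b' hb' =>
          exact fP_mem_mono gr hτ hcomm hL hG hbase a' ha'.1 b' hb'.1 i j ha'.2 hb'.2
      | zero => rw [fP_zero_right]; exact Submodule.zero_mem _
      | add x y hx hy ihx ihy =>
          rw [fP_add_right]; exact Submodule.add_mem _ ihx ihy
      | smul c x hx ihx =>
          rw [fP_smul_right]; exact Submodule.smul_mem _ _ ihx
  | zero => rw [fP_zero_left]; exact Submodule.zero_mem _
  | add x y hx hy ihx ihy =>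
      rw [fP_add_left]; exact Submodule.add_mem _ ihx ihy
  | smul c x hx ihx =>
      rw [fP_smul_left]; exact Submodule.smul_mem _ _ ihx

end Aux3
section Aux4

variable {𝕜 : Type} [Field 𝕜] [CharZero 𝕜]
variable {A : Type} [Ring A] [Algebra 𝕜 A]
variable (gr : ZMod 2 → Submodule 𝕜 A) [GradedAlgebra gr]
variable {τ P : A ⊗[𝕜] A →ₗ[𝕜] A ⊗[𝕜] A}
variable {G : Set A}

set_option linter.unusedSectionVars false

-- ksign values
lemma zmod2_cases : ∀ z : ZMod 2, z = 0 ∨ z = 1 := by decide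

lemma ksign00 : ksign 𝕜 0 0 = 1 := by norm_num [ksign]
lemma ksign01 : ksign 𝕜 0 1 = 1 := by norm_num [ksign]
lemma ksign10 : ksign 𝕜 1 0 = 1 := by norm_num [ksign]
lemma ksign11 : ksign 𝕜 1 1 = -1 := by norm_num [ksign, ZMod.val_one]

-- bilinearity of the bracket
lemma brA_add_left (a a' b : A) :
    brA 𝕜 A P τ (a + a') b = brA 𝕜 A P τ a b + brA 𝕜 A P τ a' b := by
  simp only [brA, TensorProduct.add_tmul, map_add, LinearMap.sub_apply, LinearMap.comp_apply]
  try abel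

lemma brA_add_right (a b b' : A) :
    brA 𝕜 A P τ a (b + b') = brA 𝕜 A P τ a b + brA 𝕜 A P τ a b' := by
  simp only [brA, TensorProduct.tmul_add, map_add, LinearMap.sub_apply, LinearMap.comp_apply]
  try abel

lemma brA_smul_left (c : 𝕜) (a b : A) :
    brA 𝕜 A P τ (c • a) b = c • brA 𝕜 A P τ a b := by
  rw [brA, brA, ← TensorProduct.smul_tmul', map_smul, map_smul]

lemma brA_smul_right (c : 𝕜) (a b : A) :
    brA 𝕜 A P τ a (c • b) = c • brA 𝕜 A P τ a b := by
  rw [brA, brA, TensorProduct.tmul_smul, map_smul, map_smul]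

lemma brA_zero_left (b : A) : brA 𝕜 A P τ 0 b = 0 := by
  simp [brA, TensorProduct.zero_tmul]

lemma brA_zero_right (a : A) : brA 𝕜 A P τ a 0 = 0 := by
  simp [brA, TensorProduct.tmul_zero]

section withhyp
variable (hτ : IsKoszulFlip 𝕜 A gr τ)
    (hcomm : ∀ (i j : ZMod 2), ∀ a ∈ gr i, ∀ b ∈ gr j, a * b = ksign 𝕜 i j • (b * a))
    (hL : LeibnizRules 𝕜 A P τ)
    (htop : Submodule.span 𝕜 ((Submonoid.closure G : Submonoid A) : Set A) = ⊤)
    (hG : ∀ v ∈ G, v ∈ gr 0 ∨ v ∈ gr 1)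
    (hbase : ∀ v ∈ G, ∀ w ∈ G, ∀ i j : ZMod 2, v ∈ gr i → w ∈ gr j → fP P v w ∈ gr (i + j))

include hτ hcomm hL htop hG hbase

/-- the bracket is ℤ₂-graded. -/
lemma brA_mem (i j : ZMod 2) (a : A) (ha : a ∈ gr i) (b : A) (hb : b ∈ gr j) :
    brA 𝕜 A P τ a b ∈ gr (i + j) := by
  rw [brA_eq gr hτ hcomm i j a ha b hb]
  refine Submodule.sub_mem _ (fP_mem_gr gr hτ hcomm hL htop hG hbase i j a ha b hb) ?_
  refine Submodule.smul_mem _ _ ?_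
  have := fP_mem_gr gr hτ hcomm hL htop hG hbase j i b hb a ha
  rwa [add_comm] at this

omit htop hG hbase in
/-- graded antisymmetry. -/
lemma brA_antisymm (i j : ZMod 2) (a : A) (ha : a ∈ gr i) (b : A) (hb : b ∈ gr j) :
    brA 𝕜 A P τ a b = -(ksign 𝕜 i j • brA 𝕜 A P τ b a) := by
  rw [brA_eq gr hτ hcomm i j a ha b hb, brA_eq gr hτ hcomm j i b hb a ha, ksign_symm j i]
  rw [smul_sub, smul_smul, ksign_sq, one_smul, neg_sub]

/-- graded Leibniz rule, homogeneous version. -/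
lemma brA_leibniz_right (i j k : ZMod 2) (a : A) (ha : a ∈ gr i) (b : A) (hb : b ∈ gr j)
    (c : A) (hc : c ∈ gr k) :
    brA 𝕜 A P τ a (b * c) =
      brA 𝕜 A P τ a b * c + ksign 𝕜 i j • (b * brA 𝕜 A P τ a c) := by
  rw [brA_eq gr hτ hcomm i (j+k) a ha (b*c) (SetLike.mul_mem_graded hb hc),
    brA_eq gr hτ hcomm i j a ha b hb, brA_eq gr hτ hcomm i k a ha c hc,
    fP_mul_right gr hτ hcomm hL j k a b c hb hc,
    fP_mul_left gr hτ hcomm hL k i b c a hc ha]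
  have hfac : fP P a c ∈ gr (i + k) := fP_mem_gr gr hτ hcomm hL htop hG hbase i k a ha c hc
  rw [hcomm (i+k) j (fP P a c) hfac b hb]
  simp only [ksign_add_left, ksign_add_right, smul_add, smul_smul, sub_mul, smul_mul_assoc,
    mul_smul_comm, smul_sub, mul_sub, sub_mul, mul_add, add_mul]
  rcases zmod2_cases i with rfl | rfl <;> rcases zmod2_cases j with rfl | rfl <;>
    rcases zmod2_cases k with rfl | rfl <;>
    simp only [ksign00, ksign01, ksign10, ksign11] <;> module

/-- graded Leibniz rule in the first argument, homogeneous version. -/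
lemma brA_leibniz_left (i j k : ZMod 2) (a : A) (ha : a ∈ gr i) (b : A) (hb : b ∈ gr j)
    (c : A) (hc : c ∈ gr k) :
    brA 𝕜 A P τ (a * b) c =
      a * brA 𝕜 A P τ b c + ksign 𝕜 j k • (brA 𝕜 A P τ a c * b) := by
  rw [brA_eq gr hτ hcomm (i+j) k (a*b) (SetLike.mul_mem_graded ha hb) c hc,
    brA_eq gr hτ hcomm j k b hb c hc, brA_eq gr hτ hcomm i k a ha c hc,
    fP_mul_left gr hτ hcomm hL j k a b c hb hc,
    fP_mul_right gr hτ hcomm hL i j c a b ha hb]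
  have hfcb : fP P c b ∈ gr (k + j) := fP_mem_gr gr hτ hcomm hL htop hG hbase k j c hc b hb
  rw [hcomm (k+j) i (fP P c b) hfcb a ha]
  simp only [ksign_add_left, ksign_add_right, smul_add, smul_smul, sub_mul, smul_mul_assoc,
    mul_smul_comm, smul_sub, mul_sub, sub_mul, mul_add, add_mul]
  rcases zmod2_cases i with rfl | rfl <;> rcases zmod2_cases j with rfl | rfl <;>
    rcases zmod2_cases k with rfl | rfl <;>
    simp only [ksign00, ksign01, ksign10, ksign11] <;> module

/-- the `F2`-form of the Leibniz rule for the bracket. -/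
lemma brA_leibniz_right' (i j k : ZMod 2) (a : A) (ha : a ∈ gr i) (b : A) (hb : b ∈ gr j)
    (c : A) (hc : c ∈ gr k) :
    brA 𝕜 A P τ a (b * c) =
      brA 𝕜 A P τ a b * c + ksign 𝕜 j k • (brA 𝕜 A P τ a c * b) := by
  rw [brA_leibniz_right gr hτ hcomm hL htop hG hbase i j k a ha b hb c hc]
  have hbr : brA 𝕜 A P τ a c ∈ gr (i + k) := brA_mem gr hτ hcomm hL htop hG hbase i k a ha c hc
  rw [hcomm (i+k) j (brA 𝕜 A P τ a c) hbr b hb]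
  simp only [ksign_add_left, ksign_add_right, smul_smul]
  rcases zmod2_cases i with rfl | rfl <;> rcases zmod2_cases j with rfl | rfl <;>
    rcases zmod2_cases k with rfl | rfl <;>
    simp only [ksign00, ksign01, ksign10, ksign11] <;> module

end withhyp
end Aux4
section Aux5

variable {𝕜 : Type} [Field 𝕜] [CharZero 𝕜]
variable {A : Type} [Ring A] [Algebra 𝕜 A]
variable (gr : ZMod 2 → Submodule 𝕜 A) [GradedAlgebra gr]
variable {τ P : A ⊗[𝕜] A →ₗ[𝕜] A ⊗[𝕜] A}
variable {G : Set A}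

set_option linter.unusedSectionVars false
set_option maxHeartbeats 2000000

section withhyp
variable (hτ : IsKoszulFlip 𝕜 A gr τ)
    (hcomm : ∀ (i j : ZMod 2), ∀ a ∈ gr i, ∀ b ∈ gr j, a * b = ksign 𝕜 i j • (b * a))
    (hL : LeibnizRules 𝕜 A P τ)
    (htop : Submodule.span 𝕜 ((Submonoid.closure G : Submonoid A) : Set A) = ⊤)
    (hG : ∀ v ∈ G, v ∈ gr 0 ∨ v ∈ gr 1)
    (hbase : ∀ v ∈ G, ∀ w ∈ G, ∀ i j : ZMod 2, v ∈ gr i → w ∈ gr j → fP P v w ∈ gr (i + j))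
    (hscal : ∀ v ∈ G, ∀ w ∈ G, ∃ e : 𝕜, fP P v w = e • (1 : A))

include hτ hcomm hL

lemma brA_one_left : ∀ x : A, brA 𝕜 A P τ 1 x = 0 := by
  refine grInduction gr ?_ ?_ ?_
  · exact brA_zero_right 1
  · intro k x hx
    rw [brA_eq gr hτ hcomm 0 k 1 (SetLike.one_mem_graded gr) x hx,
      fP_one_left gr hτ hcomm hL, fP_one_right gr hτ hcomm hL, smul_zero, sub_zero]
  · intro x y ihx ihy
    rw [brA_add_right, ihx, ihy, add_zero]

lemma brA_one_right : ∀ x : A, brA 𝕜 A P τ x 1 = 0 := by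
  refine grInduction gr ?_ ?_ ?_
  · exact brA_zero_left 1
  · intro k x hx
    rw [brA_eq gr hτ hcomm k 0 x hx 1 (SetLike.one_mem_graded gr),
      fP_one_left gr hτ hcomm hL, fP_one_right gr hτ hcomm hL, smul_zero, sub_zero]
  · intro x y ihx ihy
    rw [brA_add_left, ihx, ihy, add_zero]

include hscal in
lemma brA_scalar (v : A) (hv : v ∈ G) (w : A) (hw : w ∈ G) (i j : ZMod 2)
    (hvi : v ∈ gr i) (hwj : w ∈ gr j) :
    ∃ e : 𝕜, brA 𝕜 A P τ v w = e • (1 : A) := by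
  obtain ⟨e1, he1⟩ := hscal v hv w hw
  obtain ⟨e2, he2⟩ := hscal w hw v hv
  exact ⟨e1 - ksign 𝕜 i j * e2, by
    rw [brA_eq gr hτ hcomm i j v hvi w hwj, he1, he2, smul_smul, sub_smul]⟩

include htop hG hbase hscal in
/-- the graded Jacobi identity on monomials. -/
lemma jacobi_mono :
    ∀ a ∈ Submonoid.closure G, ∀ b ∈ Submonoid.closure G, ∀ c ∈ Submonoid.closure G,
      ∀ i j k : ZMod 2, a ∈ gr i → b ∈ gr j → c ∈ gr k →
      brA 𝕜 A P τ a (brA 𝕜 A P τ b c) =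
        brA 𝕜 A P τ (brA 𝕜 A P τ a b) c +
          ksign 𝕜 i j • brA 𝕜 A P τ b (brA 𝕜 A P τ a c) := by
  have hbm := brA_mem gr hτ hcomm hL htop hG hbase
  have hll := brA_leibniz_left gr hτ hcomm hL htop hG hbase
  have hlr := brA_leibniz_right gr hτ hcomm hL htop hG hbase
  intro a ha
  induction ha using Submonoid.closure_induction with
  | one =>
      intro b _ c _ i j k _ _ _
      simp [brA_one_left gr hτ hcomm hL, brA_zero_left, brA_zero_right]
  | mem v hv =>
      intro b hb
      induction hb using Submonoid.closure_induction with
      | one =>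
          intro c _ i j k hvi _ _
          simp [brA_one_left gr hτ hcomm hL, brA_one_right gr hτ hcomm hL,
            brA_zero_left, brA_zero_right]
      | mem w hw =>
          intro c hc
          induction hc using Submonoid.closure_induction with
          | one =>
              intro i j k hvi hwj _
              simp [brA_one_right gr hτ hcomm hL, brA_zero_left, brA_zero_right]
          | mem u hu =>
              intro i j k hvi hwj huk
              obtain ⟨e1, he1⟩ :=
                brA_scalar gr hτ hcomm hL hscal w hw u hu j k hwj huk
              obtain ⟨e2, he2⟩ :=
                brA_scalar gr hτ hcomm hL hscal v hv w hw i j hvi hwj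
              obtain ⟨e3, he3⟩ :=
                brA_scalar gr hτ hcomm hL hscal v hv u hu i k hvi huk
              rw [he1, he2, he3, brA_smul_right, brA_smul_left, brA_smul_right,
                brA_one_right gr hτ hcomm hL, brA_one_left gr hτ hcomm hL,
                brA_one_right gr hτ hcomm hL, smul_zero, smul_zero, smul_zero,
                smul_zero, add_zero]
          | mul x y hx hy ihx ihy =>
              -- c-step : c = x * y
              intro i j k hvi hwj hk
              obtain ⟨k₁, hk₁⟩ := closure_homog gr hG x hx
              obtain ⟨k₂, hk₂⟩ := closure_homog gr hG y hy
              by_cases h0 : x * y = 0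
              · rw [h0]
                simp [brA_zero_right]
              · obtain rfl : k = k₁ + k₂ :=
                  DirectSum.degree_eq_of_mem_mem gr hk
                    (SetLike.mul_mem_graded hk₁ hk₂) h0
                have hwx := hbm j k₁ w hwj x hk₁
                have hwy := hbm j k₂ w hwj y hk₂
                have hvx := hbm i k₁ v hvi x hk₁
                have hvy := hbm i k₂ v hvi y hk₂
                have hvw := hbm i j v hvi w hwj
                have h1 := hlr j k₁ k₂ w hwj x hk₁ y hk₂
                have h3 := hlr i (j+k₁) k₂ v hvi _ hwx y hk₂
                have h4 := hlr i k₁ (j+k₂) v hvi x hk₁ _ hwy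
                have h5x := ihx i j k₁ hvi hwj hk₁
                have h5y := ihy i j k₂ hvi hwj hk₂
                have h6 := hlr (i+j) k₁ k₂ _ hvw x hk₁ y hk₂
                have h7 := hlr i k₁ k₂ v hvi x hk₁ y hk₂
                have h8 := hlr j (i+k₁) k₂ w hwj _ hvx y hk₂
                have h9 := hlr j k₁ (i+k₂) w hwj x hk₁ _ hvy
                rw [h1, brA_add_right, brA_smul_right, h3, h4, h5x, h5y, h6, h7,
                  brA_add_right, brA_smul_right, h8, h9]
                simp only [smul_add, smul_smul, add_mul, smul_mul_assoc, mul_smul_comm,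
                  mul_add, ksign_add_left, ksign_add_right]
                rcases zmod2_cases i with rfl | rfl <;> rcases zmod2_cases j with rfl | rfl <;>
                  rcases zmod2_cases k₁ with rfl | rfl <;> rcases zmod2_cases k₂ with rfl | rfl <;>
                  simp only [ksign00, ksign01, ksign10, ksign11] <;> module
      | mul x y hx hy ihx ihy =>
          -- b-step : b = x * y
          intro c hc i j k hvi hj hck
          obtain ⟨j₁, hj₁⟩ := closure_homog gr hG x hx
          obtain ⟨j₂, hj₂⟩ := closure_homog gr hG y hy
          by_cases h0 : x * y = 0
          · rw [h0]
            simp [brA_zero_right, brA_zero_left]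
          · obtain rfl : j = j₁ + j₂ :=
              DirectSum.degree_eq_of_mem_mem gr hj
                (SetLike.mul_mem_graded hj₁ hj₂) h0
            have hyc := hbm j₂ k y hj₂ c hck
            have hxc := hbm j₁ k x hj₁ c hck
            have hvx := hbm i j₁ v hvi x hj₁
            have hvy := hbm i j₂ v hvi y hj₂
            have hvc := hbm i k v hvi c hck
            -- T1
            have h1 := hll j₁ j₂ k x hj₁ y hj₂ c hck
            have h2 := hlr i j₁ (j₂+k) v hvi x hj₁ _ hyc
            have h3 := hlr i (j₁+k) j₂ v hvi _ hxc y hj₂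
            -- T2
            have h4 := hlr i j₁ j₂ v hvi x hj₁ y hj₂
            have h5 := hll (i+j₁) j₂ k _ hvx y hj₂ c hck
            have h6 := hll j₁ (i+j₂) k x hj₁ _ hvy c hck
            -- T3
            have h7 := hll j₁ j₂ (i+k) x hj₁ y hj₂ _ hvc
            -- IHs
            have h8 := ihx c hc i j₁ k hvi hj₁ hck
            have h9 := ihy c hc i j₂ k hvi hj₂ hck
            rw [h1, brA_add_right, brA_smul_right, h2, h3, h8, h9, h4, brA_add_left,
              brA_smul_left, h5, h6, h7]
            simp only [smul_add, smul_smul, add_mul, smul_mul_assoc, mul_smul_comm,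
              mul_add, ksign_add_left, ksign_add_right]
            rcases zmod2_cases i with rfl | rfl <;> rcases zmod2_cases j₁ with rfl | rfl <;>
              rcases zmod2_cases j₂ with rfl | rfl <;> rcases zmod2_cases k with rfl | rfl <;>
              simp only [ksign00, ksign01, ksign10, ksign11] <;> module
  | mul x y hx hy ihx ihy =>
      -- a-step : a = x * y
      intro b hb c hc i j k hi hbj hck
      obtain ⟨i₁, hi₁⟩ := closure_homog gr hG x hx
      obtain ⟨i₂, hi₂⟩ := closure_homog gr hG y hy
      by_cases h0 : x * y = 0
      · rw [h0]
        simp [brA_zero_right, brA_zero_left]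
      · obtain rfl : i = i₁ + i₂ :=
          DirectSum.degree_eq_of_mem_mem gr hi
            (SetLike.mul_mem_graded hi₁ hi₂) h0
        have hbc := hbm j k b hbj c hck
        have hyb := hbm i₂ j y hi₂ b hbj
        have hxb := hbm i₁ j x hi₁ b hbj
        have hyc := hbm i₂ k y hi₂ c hck
        have hxc := hbm i₁ k x hi₁ c hck
        -- T1
        have h1 := hll i₁ i₂ (j+k) x hi₁ y hi₂ _ hbc
        have h2 := ihy b hb c hc i₂ j k hi₂ hbj hck
        have h3 := ihx b hb c hc i₁ j k hi₁ hbj hck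
        -- T2
        have h4 := hll i₁ i₂ j x hi₁ y hi₂ b hbj
        have h5 := hll i₁ (i₂+j) k x hi₁ _ hyb c hck
        have h6 := hll (i₁+j) i₂ k _ hxb y hi₂ c hck
        -- T3
        have h7 := hll i₁ i₂ k x hi₁ y hi₂ c hck
        have h8 := hlr j i₁ (i₂+k) b hbj x hi₁ _ hyc
        have h9 := hlr j (i₁+k) i₂ b hbj _ hxc y hi₂
        -- antisymmetry rewrites
        have ha1 := brA_antisymm gr hτ hcomm hL j i₁ b hbj x hi₁
        have ha2 := brA_antisymm gr hτ hcomm hL j i₂ b hbj y hi₂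
        rw [h1, h2, h3, h4, brA_add_left, brA_smul_left, h5, h6, h7, brA_add_right,
          brA_smul_right, h8, h9, ha1, ha2]
        simp only [smul_add, smul_smul, add_mul, smul_mul_assoc, mul_smul_comm,
          mul_add, neg_smul, smul_neg, neg_mul, mul_neg, neg_neg, neg_add,
          ksign_add_left, ksign_add_right]
        rcases zmod2_cases i₁ with rfl | rfl <;> rcases zmod2_cases i₂ with rfl | rfl <;>
          rcases zmod2_cases j with rfl | rfl <;> rcases zmod2_cases k with rfl | rfl <;>
          simp only [ksign00, ksign01, ksign10, ksign11] <;> module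

end withhyp
end Aux5
section Aux6

variable {𝕜 : Type} [Field 𝕜] [CharZero 𝕜]
variable {A : Type} [Ring A] [Algebra 𝕜 A]
variable (gr : ZMod 2 → Submodule 𝕜 A) [GradedAlgebra gr]
variable (deg : ℕ → Submodule 𝕜 A)
variable {τ P : A ⊗[𝕜] A →ₗ[𝕜] A ⊗[𝕜] A}

set_option linter.unusedSectionVars false

/-- the doubly homogeneous generators -/
def genG : Set A :=
  ((deg 1 ⊓ gr 0 : Submodule 𝕜 A) : Set A) ∪ ((deg 1 ⊓ gr 1 : Submodule 𝕜 A) : Set A)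

lemma genG_gr : ∀ v ∈ genG gr deg, v ∈ gr 0 ∨ v ∈ gr 1 := by
  intro v hv
  rcases hv with h | h
  · exact Or.inl (Submodule.mem_inf.mp h).2
  · exact Or.inr (Submodule.mem_inf.mp h).2

lemma genG_deg : ∀ v ∈ genG gr deg, v ∈ deg 1 := by
  intro v hv
  rcases hv with h | h
  · exact (Submodule.mem_inf.mp h).1
  · exact (Submodule.mem_inf.mp h).1

lemma htop_of (hgen : Algebra.adjoin 𝕜 ((deg 1 : Submodule 𝕜 A) : Set A) = ⊤)
    (hVgr : deg 1 = (deg 1 ⊓ gr 0) ⊔ (deg 1 ⊓ gr 1)) :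
    Submodule.span 𝕜 ((Submonoid.closure (genG gr deg) : Submonoid A) : Set A) = ⊤ := by
  have hadj : Algebra.adjoin 𝕜 (genG gr deg) = ⊤ := by
    rw [← top_le_iff, ← hgen]
    apply Algebra.adjoin_le
    intro v hv
    have hv' : v ∈ (deg 1 ⊓ gr 0) ⊔ (deg 1 ⊓ gr 1) := by
      rw [← hVgr]; exact hv
    obtain ⟨y, hy, z, hz, rfl⟩ := Submodule.mem_sup.mp hv'
    exact add_mem (Algebra.subset_adjoin (Or.inl hy)) (Algebra.subset_adjoin (Or.inr hz))
  have := Algebra.adjoin_eq_span (R := 𝕜) (s := genG gr deg (A := A))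
  rw [hadj] at this
  rw [← this]
  rfl

variable (Λ : A →ₗ[𝕜] A →ₗ[𝕜] 𝕜)

lemma fP_value (hPgen : ∀ v ∈ deg 1, ∀ w ∈ deg 1,
      P (v ⊗ₜ[𝕜] w) = Λ v w • ((1 : A) ⊗ₜ[𝕜] (1 : A)))
    (v : A) (hv : v ∈ genG gr deg) (w : A) (hw : w ∈ genG gr deg) :
    fP P v w = Λ v w • (1 : A) := by
  rw [fP, hPgen v (genG_deg gr deg v hv) w (genG_deg gr deg w hw), map_smul, mu_tmul, mul_one]

lemma hscal_of (hPgen : ∀ v ∈ deg 1, ∀ w ∈ deg 1,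
      P (v ⊗ₜ[𝕜] w) = Λ v w • ((1 : A) ⊗ₜ[𝕜] (1 : A))) :
    ∀ v ∈ genG gr deg, ∀ w ∈ genG gr deg, ∃ e : 𝕜, fP P v w = e • (1 : A) :=
  fun v hv w hw => ⟨Λ v w, fP_value gr deg Λ hPgen v hv w hw⟩

lemma hbase_of
    (hΛeven : ∀ v ∈ deg 1 ⊓ gr 0, ∀ w ∈ deg 1 ⊓ gr 1, Λ v w = 0 ∧ Λ w v = 0)
    (hPgen : ∀ v ∈ deg 1, ∀ w ∈ deg 1,
      P (v ⊗ₜ[𝕜] w) = Λ v w • ((1 : A) ⊗ₜ[𝕜] (1 : A))) :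
    ∀ v ∈ genG gr deg, ∀ w ∈ genG gr deg, ∀ i j : ZMod 2,
      v ∈ gr i → w ∈ gr j → fP P v w ∈ gr (i + j) := by
  intro v hv w hw i j hvi hwj
  rcases eq_or_ne v 0 with rfl | hv0
  · rw [fP_zero_left]; exact Submodule.zero_mem _
  rcases eq_or_ne w 0 with rfl | hw0
  · rw [fP_zero_right]; exact Submodule.zero_mem _
  have hv1 := genG_deg gr deg v hv
  have hw1 := genG_deg gr deg w hw
  have hval := fP_value gr deg Λ hPgen v hv w hw
  rcases genG_gr gr deg v hv with hp | hp <;> rcases genG_gr gr deg w hw with hq | hq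
  · obtain rfl : i = 0 := DirectSum.degree_eq_of_mem_mem gr hvi hp hv0
    obtain rfl : j = 0 := DirectSum.degree_eq_of_mem_mem gr hwj hq hw0
    rw [hval]
    exact Submodule.smul_mem _ _ (by simpa using SetLike.one_mem_graded gr)
  · obtain rfl : i = 0 := DirectSum.degree_eq_of_mem_mem gr hvi hp hv0
    obtain rfl : j = 1 := DirectSum.degree_eq_of_mem_mem gr hwj hq hw0
    rw [hval, (hΛeven v (Submodule.mem_inf.mpr ⟨hv1, hp⟩) w
      (Submodule.mem_inf.mpr ⟨hw1, hq⟩)).1, zero_smul]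
    exact Submodule.zero_mem _
  · obtain rfl : i = 1 := DirectSum.degree_eq_of_mem_mem gr hvi hp hv0
    obtain rfl : j = 0 := DirectSum.degree_eq_of_mem_mem gr hwj hq hw0
    rw [hval, (hΛeven w (Submodule.mem_inf.mpr ⟨hw1, hq⟩) v
      (Submodule.mem_inf.mpr ⟨hv1, hp⟩)).2, zero_smul]
    exact Submodule.zero_mem _
  · obtain rfl : i = 1 := DirectSum.degree_eq_of_mem_mem gr hvi hp hv0
    obtain rfl : j = 1 := DirectSum.degree_eq_of_mem_mem gr hwj hq hw0
    rw [hval, show ((1 : ZMod 2) + 1) = 0 by decide]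
    exact Submodule.smul_mem _ _ (SetLike.one_mem_graded gr)

end Aux6
section Aux7

variable {𝕜 : Type} [Field 𝕜] [CharZero 𝕜]
variable {A : Type} [Ring A] [Algebra 𝕜 A]
variable (gr : ZMod 2 → Submodule 𝕜 A) [GradedAlgebra gr]
variable (deg : ℕ → Submodule 𝕜 A)
variable {τ P Q : A ⊗[𝕜] A →ₗ[𝕜] A ⊗[𝕜] A}
variable (Λ : A →ₗ[𝕜] A →ₗ[𝕜] 𝕜)

set_option linter.unusedSectionVars false
set_option maxHeartbeats 1000000

lemma fQ_value
    (hQ : ∀ (i j : ZMod 2), ∀ v ∈ deg 1 ⊓ gr i, ∀ w ∈ deg 1 ⊓ gr j,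
      Q (v ⊗ₜ[𝕜] w) = ((2:𝕜)⁻¹ * (Λ v w - ksign 𝕜 i j * Λ w v)) • ((1 : A) ⊗ₜ[𝕜] (1 : A)))
    (i j : ZMod 2)
    (v : A) (hv1 : v ∈ deg 1) (hvi : v ∈ gr i) (w : A) (hw1 : w ∈ deg 1) (hwj : w ∈ gr j) :
    fP Q v w = ((2:𝕜)⁻¹ * (Λ v w - ksign 𝕜 i j * Λ w v)) • (1 : A) := by
  rw [fP, hQ i j v (Submodule.mem_inf.mpr ⟨hv1, hvi⟩) w (Submodule.mem_inf.mpr ⟨hw1, hwj⟩),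
    map_smul, mu_tmul, mul_one]

lemma hbaseQ_of
    (hΛeven : ∀ v ∈ deg 1 ⊓ gr 0, ∀ w ∈ deg 1 ⊓ gr 1, Λ v w = 0 ∧ Λ w v = 0)
    (hQ : ∀ (i j : ZMod 2), ∀ v ∈ deg 1 ⊓ gr i, ∀ w ∈ deg 1 ⊓ gr j,
      Q (v ⊗ₜ[𝕜] w) = ((2:𝕜)⁻¹ * (Λ v w - ksign 𝕜 i j * Λ w v)) • ((1 : A) ⊗ₜ[𝕜] (1 : A))) :
    ∀ v ∈ genG gr deg, ∀ w ∈ genG gr deg, ∀ i j : ZMod 2,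
      v ∈ gr i → w ∈ gr j → fP Q v w ∈ gr (i + j) := by
  intro v hv w hw i j hvi hwj
  rcases eq_or_ne v 0 with rfl | hv0
  · rw [fP_zero_left]; exact Submodule.zero_mem _
  rcases eq_or_ne w 0 with rfl | hw0
  · rw [fP_zero_right]; exact Submodule.zero_mem _
  have hv1 := genG_deg gr deg v hv
  have hw1 := genG_deg gr deg w hw
  rcases genG_gr gr deg v hv with hp | hp <;> rcases genG_gr gr deg w hw with hq | hq
  · obtain rfl : i = 0 := DirectSum.degree_eq_of_mem_mem gr hvi hp hv0
    obtain rfl : j = 0 := DirectSum.degree_eq_of_mem_mem gr hwj hq hw0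
    rw [fQ_value gr deg Λ hQ 0 0 v hv1 hp w hw1 hq]
    exact Submodule.smul_mem _ _ (by simpa using SetLike.one_mem_graded gr)
  · obtain rfl : i = 0 := DirectSum.degree_eq_of_mem_mem gr hvi hp hv0
    obtain rfl : j = 1 := DirectSum.degree_eq_of_mem_mem gr hwj hq hw0
    have h := hΛeven v (Submodule.mem_inf.mpr ⟨hv1, hp⟩) w (Submodule.mem_inf.mpr ⟨hw1, hq⟩)
    rw [fQ_value gr deg Λ hQ 0 1 v hv1 hp w hw1 hq, h.1, h.2]
    norm_num
  · obtain rfl : i = 1 := DirectSum.degree_eq_of_mem_mem gr hvi hp hv0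
    obtain rfl : j = 0 := DirectSum.degree_eq_of_mem_mem gr hwj hq hw0
    have h := hΛeven w (Submodule.mem_inf.mpr ⟨hw1, hq⟩) v (Submodule.mem_inf.mpr ⟨hv1, hp⟩)
    rw [fQ_value gr deg Λ hQ 1 0 v hv1 hp w hw1 hq, h.1, h.2]
    norm_num
  · obtain rfl : i = 1 := DirectSum.degree_eq_of_mem_mem gr hvi hp hv0
    obtain rfl : j = 1 := DirectSum.degree_eq_of_mem_mem gr hwj hq hw0
    rw [fQ_value gr deg Λ hQ 1 1 v hv1 hp w hw1 hq, show ((1 : ZMod 2) + 1) = 0 by decide]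
    exact Submodule.smul_mem _ _ (SetLike.one_mem_graded gr)

section E

variable (hτ : IsKoszulFlip 𝕜 A gr τ)
    (hcomm : ∀ (i j : ZMod 2), ∀ a ∈ gr i, ∀ b ∈ gr j, a * b = ksign 𝕜 i j • (b * a))
    (hL : LeibnizRules 𝕜 A P τ)
    (hLQ : LeibnizRules 𝕜 A Q τ)
    (hgen : Algebra.adjoin 𝕜 ((deg 1 : Submodule 𝕜 A) : Set A) = ⊤)
    (hVgr : deg 1 = (deg 1 ⊓ gr 0) ⊔ (deg 1 ⊓ gr 1))
    (hΛeven : ∀ v ∈ deg 1 ⊓ gr 0, ∀ w ∈ deg 1 ⊓ gr 1, Λ v w = 0 ∧ Λ w v = 0)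
    (hPgen : ∀ v ∈ deg 1, ∀ w ∈ deg 1,
      P (v ⊗ₜ[𝕜] w) = Λ v w • ((1 : A) ⊗ₜ[𝕜] (1 : A)))
    (hQ : ∀ (i j : ZMod 2), ∀ v ∈ deg 1 ⊓ gr i, ∀ w ∈ deg 1 ⊓ gr j,
      Q (v ⊗ₜ[𝕜] w) = ((2:𝕜)⁻¹ * (Λ v w - ksign 𝕜 i j * Λ w v)) • ((1 : A) ⊗ₜ[𝕜] (1 : A)))

include hτ hcomm hL hLQ hgen hVgr hΛeven hPgen hQ in
lemma br_eq_two_smul_mono :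
    ∀ a ∈ Submonoid.closure (genG gr deg), ∀ b ∈ Submonoid.closure (genG gr deg),
      ∀ i j : ZMod 2, a ∈ gr i → b ∈ gr j →
      brA 𝕜 A P τ a b = (2:𝕜) • fP Q a b := by
  have htop := htop_of gr deg hgen hVgr
  have hG := genG_gr gr deg
  have hbase := hbase_of gr deg Λ hΛeven hPgen
  intro a ha
  induction ha using Submonoid.closure_induction with
  | one =>
      intro b hb i j _ _
      rw [brA_one_left gr hτ hcomm hL, fP_one_left gr hτ hcomm hLQ, smul_zero]
  | mem v hv =>
      intro b hb
      induction hb using Submonoid.closure_induction with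
      | one =>
          intro i j _ _
          rw [brA_one_right gr hτ hcomm hL, fP_one_right gr hτ hcomm hLQ, smul_zero]
      | mem w hw =>
          intro i j hvi hwj
          rcases eq_or_ne v 0 with rfl | hv0
          · rw [brA_zero_left, fP_zero_left, smul_zero]
          rcases eq_or_ne w 0 with rfl | hw0
          · rw [brA_zero_right, fP_zero_right, smul_zero]
          have hv1 := genG_deg gr deg v hv
          have hw1 := genG_deg gr deg w hw
          rw [brA_eq gr hτ hcomm i j v hvi w hwj,
            fP_value gr deg Λ hPgen v hv w hw, fP_value gr deg Λ hPgen w hw v hv,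
            fQ_value gr deg Λ hQ i j v hv1 hvi w hw1 hwj,
            smul_smul, smul_smul, ← sub_smul, ← mul_assoc,
            mul_inv_cancel₀ (by norm_num : (2:𝕜) ≠ 0), one_mul]
      | mul x y hx hy ihx ihy =>
          intro i j hvi hj
          obtain ⟨k₁, hk₁⟩ := closure_homog gr hG x hx
          obtain ⟨k₂, hk₂⟩ := closure_homog gr hG y hy
          by_cases h0 : x * y = 0
          · rw [h0, brA_zero_right, fP_zero_right, smul_zero]
          obtain rfl : j = k₁ + k₂ :=
            DirectSum.degree_eq_of_mem_mem gr hj (SetLike.mul_mem_graded hk₁ hk₂) h0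
          rw [brA_leibniz_right' gr hτ hcomm hL htop hG hbase i k₁ k₂ v hvi x hk₁ y hk₂,
            fP_mul_right gr hτ hcomm hLQ k₁ k₂ v x y hk₁ hk₂,
            ihx i k₁ hvi hk₁, ihy i k₂ hvi hk₂]
          simp only [smul_mul_assoc, smul_add, smul_smul]
          module
  | mul x y hx hy ihx ihy =>
      intro b hb i j hi hbj
      obtain ⟨i₁, hi₁⟩ := closure_homog gr hG x hx
      obtain ⟨i₂, hi₂⟩ := closure_homog gr hG y hy
      by_cases h0 : x * y = 0
      · rw [h0, brA_zero_left, fP_zero_left, smul_zero]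
      obtain rfl : i = i₁ + i₂ :=
        DirectSum.degree_eq_of_mem_mem gr hi (SetLike.mul_mem_graded hi₁ hi₂) h0
      rw [brA_leibniz_left gr hτ hcomm hL htop hG hbase i₁ i₂ j x hi₁ y hi₂ b hbj,
        fP_mul_left gr hτ hcomm hLQ i₂ j x y b hi₂ hbj,
        ihx b hb i₁ j hi₁ hbj, ihy b hb i₂ j hi₂ hbj]
      simp only [smul_mul_assoc, mul_smul_comm, smul_add, smul_smul]
      module

include hτ hcomm hL hLQ hgen hVgr hΛeven hPgen hQ in
lemma br_eq_two_smul : ∀ a b : A, brA 𝕜 A P τ a b = (2:𝕜) • fP Q a b := by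
  have htop := htop_of gr deg hgen hVgr
  have hG := genG_gr gr deg
  have hmono := br_eq_two_smul_mono gr deg Λ hτ hcomm hL hLQ hgen hVgr hΛeven hPgen hQ
  have hbase2 : ∀ a ∈ Submonoid.closure (genG gr deg), ∀ b ∈ Submonoid.closure (genG gr deg),
      brA 𝕜 A P τ a b = (2:𝕜) • fP Q a b := by
    intro a ha b hb
    obtain ⟨i, hi⟩ := closure_homog gr hG a ha
    obtain ⟨j, hj⟩ := closure_homog gr hG b hb
    exact hmono a ha b hb i j hi hj
  intro a b
  have ha : a ∈ Submodule.span 𝕜 ((Submonoid.closure (genG gr deg) : Submonoid A) : Set A) := by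
    rw [htop]; trivial
  have hb : b ∈ Submodule.span 𝕜 ((Submonoid.closure (genG gr deg) : Submonoid A) : Set A) := by
    rw [htop]; trivial
  induction ha using Submodule.span_induction with
  | mem a' ha' =>
      induction hb using Submodule.span_induction with
      | mem b' hb' => exact hbase2 a' ha' b' hb'
      | zero => rw [brA_zero_right, fP_zero_right, smul_zero]
      | add x y hx hy ihx ihy =>
          rw [brA_add_right, fP_add_right, ihx, ihy, smul_add]
      | smul c x hx ihx =>
          rw [brA_smul_right, fP_smul_right, ihx, smul_comm]
  | zero => rw [brA_zero_left, fP_zero_left, smul_zero]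
  | add x y hx hy ihx ihy =>
      rw [brA_add_left, fP_add_left, ihx, ihy, smul_add]
  | smul c x hx ihx =>
      rw [brA_smul_left, fP_smul_left, ihx, smul_comm]

end E
end Aux7

/-- `{v, w} := μ ∘ (P_Λ − P_Λ^{op})(v ⊗ w)` defines a `ℤ₂`-graded
Poisson bracket on `Sym(V)`: it is graded antisymmetric, satisfies the graded Leibniz
rule and the graded Jacobi identity.  Moreover `{v, w} = 2 μ ∘ P_{Λ₋}(v ⊗ w)` depends
only on the antisymmetric part `Λ₋` of `Λ`. -/
theorem statement1
    (𝕜 : Type) [Field 𝕜] [CharZero 𝕜]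
    (A : Type) [Ring A] [Algebra 𝕜 A]
    (gr : ZMod 2 → Submodule 𝕜 A) [GradedAlgebra gr]
    (deg : ℕ → Submodule 𝕜 A) [GradedAlgebra deg]
    (hcomm : ∀ (i j : ZMod 2), ∀ a ∈ gr i, ∀ b ∈ gr j, a * b = ksign 𝕜 i j • (b * a))
    (hgen : Algebra.adjoin 𝕜 ((deg 1 : Submodule 𝕜 A) : Set A) = ⊤)
    (hVgr : deg 1 = (deg 1 ⊓ gr 0) ⊔ (deg 1 ⊓ gr 1))
    (τ : A ⊗[𝕜] A →ₗ[𝕜] A ⊗[𝕜] A) (hτ : IsKoszulFlip 𝕜 A gr τ)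
    (Λ : A →ₗ[𝕜] A →ₗ[𝕜] 𝕜)
    (hΛeven : ∀ v ∈ deg 1 ⊓ gr 0, ∀ w ∈ deg 1 ⊓ gr 1, Λ v w = 0 ∧ Λ w v = 0)
    (P : A ⊗[𝕜] A →ₗ[𝕜] A ⊗[𝕜] A)
    (hPgen : ∀ v ∈ deg 1, ∀ w ∈ deg 1,
      P (v ⊗ₜ[𝕜] w) = Λ v w • ((1 : A) ⊗ₜ[𝕜] (1 : A)))
    (hPLeib : LeibnizRules 𝕜 A P τ)
    (hPdeg : ∀ n m : ℕ, ∀ x ∈ tsub 𝕜 A (deg (n+1)) (deg (m+1)),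
      P x ∈ tsub 𝕜 A (deg n) (deg m))
    (hP0l : ∀ m : ℕ, ∀ x ∈ tsub 𝕜 A (deg 0) (deg m), P x = 0)
    (hP0r : ∀ n : ℕ, ∀ x ∈ tsub 𝕜 A (deg n) (deg 0), P x = 0) :
    -- the bracket is ℤ₂-graded
    (∀ (i j : ZMod 2), ∀ a ∈ gr i, ∀ b ∈ gr j,
      brA 𝕜 A P τ a b ∈ gr (i + j)) ∧
    -- graded antisymmetry
    (∀ (i j : ZMod 2), ∀ a ∈ gr i, ∀ b ∈ gr j,
      brA 𝕜 A P τ a b = -(ksign 𝕜 i j • brA 𝕜 A P τ b a)) ∧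
    -- graded Leibniz rule in each argument
    (∀ (i j : ZMod 2), ∀ a ∈ gr i, ∀ b ∈ gr j, ∀ c : A,
      brA 𝕜 A P τ a (b * c) =
        brA 𝕜 A P τ a b * c + ksign 𝕜 i j • (b * brA 𝕜 A P τ a c)) ∧
    (∀ (i j k : ZMod 2), ∀ a ∈ gr i, ∀ b ∈ gr j, ∀ c ∈ gr k,
      brA 𝕜 A P τ (a * b) c =
        a * brA 𝕜 A P τ b c + ksign 𝕜 j k • (brA 𝕜 A P τ a c * b)) ∧
    -- graded Jacobi identity
    (∀ (i j : ZMod 2), ∀ a ∈ gr i, ∀ b ∈ gr j, ∀ c : A,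
      brA 𝕜 A P τ a (brA 𝕜 A P τ b c) =
        brA 𝕜 A P τ (brA 𝕜 A P τ a b) c +
          ksign 𝕜 i j • brA 𝕜 A P τ b (brA 𝕜 A P τ a c)) ∧
    -- `{v, w} = 2 μ ∘ P_{Λ₋}(v ⊗ w)`: the bracket only depends on the antisymmetric
    -- part `Λ₋ = ½(Λ − Λ∘τ)` of `Λ`
    (∀ P' : A ⊗[𝕜] A →ₗ[𝕜] A ⊗[𝕜] A,
      (∀ (i j : ZMod 2), ∀ v ∈ deg 1 ⊓ gr i, ∀ w ∈ deg 1 ⊓ gr j,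
        P' (v ⊗ₜ[𝕜] w) =
          ((2:𝕜)⁻¹ * (Λ v w - ksign 𝕜 i j * Λ w v)) • ((1 : A) ⊗ₜ[𝕜] (1 : A))) →
      LeibnizRules 𝕜 A P' τ →
      ∀ a b : A, brA 𝕜 A P τ a b = (2:𝕜) • mu 𝕜 A (P' (a ⊗ₜ[𝕜] b))) := by
  have htop := htop_of gr deg hgen hVgr
  have hG := genG_gr gr deg
  have hbase := hbase_of gr deg Λ hΛeven hPgen
  have hscal := hscal_of gr deg Λ hPgen
  refine ⟨?_, ?_, ?_, ?_, ?_, ?_⟩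
  · intro i j a ha b hb
    exact brA_mem gr hτ hcomm hPLeib htop hG hbase i j a ha b hb
  · intro i j a ha b hb
    exact brA_antisymm gr hτ hcomm hPLeib i j a ha b hb
  · intro i j a ha b hb c
    refine grInduction gr
      (p := fun c => brA 𝕜 A P τ a (b * c) =
        brA 𝕜 A P τ a b * c + ksign 𝕜 i j • (b * brA 𝕜 A P τ a c)) ?_ ?_ ?_ c
    · simp [brA_zero_right]
    · intro k c hc
      exact brA_leibniz_right gr hτ hcomm hPLeib htop hG hbase i j k a ha b hb c hc
    · intro c₁ c₂ ih₁ ih₂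
      simp only [mul_add, brA_add_right, smul_add]
      rw [ih₁, ih₂]
      abel
  · intro i j k a ha b hb c hc
    exact brA_leibniz_left gr hτ hcomm hPLeib htop hG hbase i j k a ha b hb c hc
  · intro i j a ha b hb c
    refine grInduction gr
      (p := fun c => brA 𝕜 A P τ a (brA 𝕜 A P τ b c) =
        brA 𝕜 A P τ (brA 𝕜 A P τ a b) c +
          ksign 𝕜 i j • brA 𝕜 A P τ b (brA 𝕜 A P τ a c)) ?_ ?_ ?_ c
    · simp [brA_zero_right]
    · intro k c hc
      have hsa := mem_span_homog gr htop hG i a ha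
      clear ha
      induction hsa using Submodule.span_induction with
      | mem a' ha' =>
          have hsb := mem_span_homog gr htop hG j b hb
          clear hb
          induction hsb using Submodule.span_induction with
          | mem b' hb' =>
              have hsc := mem_span_homog gr htop hG k c hc
              clear hc
              induction hsc using Submodule.span_induction with
              | mem c' hc' =>
                  exact jacobi_mono gr hτ hcomm hPLeib htop hG hbase hscal
                    a' ha'.1 b' hb'.1 c' hc'.1 i j k ha'.2 hb'.2 hc'.2
              | zero => simp [brA_zero_right]
              | add x y hx hy ihx ihy =>
                  simp only [brA_add_right, smul_add]
                  rw [ihx, ihy]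
                  abel
              | smul e x hx ihx =>
                  simp only [brA_smul_right]
                  rw [ihx]
                  module
          | zero => simp [brA_zero_left, brA_zero_right]
          | add x y hx hy ihx ihy =>
              simp only [brA_add_left, brA_add_right, smul_add]
              rw [ihx, ihy]
              abel
          | smul e x hx ihx =>
              simp only [brA_smul_left, brA_smul_right]
              rw [ihx]
              module
      | zero => simp [brA_zero_left, brA_zero_right]
      | add x y hx hy ihx ihy =>
          simp only [brA_add_left, brA_add_right, smul_add]
          rw [ihx, ihy]
          abel
      | smul e x hx ihx =>
          simp only [brA_smul_left, brA_smul_right]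
          rw [ihx]
          module
    · intro c₁ c₂ ih₁ ih₂
      simp only [brA_add_right, smul_add]
      rw [ih₁, ih₂]
      abel
  · intro P' hP' hL' a b
    exact br_eq_two_smul gr deg Λ hτ hcomm hPLeib hL' hgen hVgr hΛeven hPgen hP' a b
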